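/- Let 0 ≤ θ ≤ 1/2 and q > −1. Then there exist constants C₁, C₂ > 0 and T > 0 such that C₁ t^(−(q+1)/(2(1−θ))) ≤ ∫₀¹ (1 + r^(2−2θ))^(−t) r^q dr ≤ C₂ t^(−(q+1)/(2(1−θ))) for all t ≥ T. -/

import Mathlib

open Real MeasureTheory Set

/-- `exp (x/2) ≤ 1 + x` for `0 ≤ x ≤ 1`. -/
lemma exp_half_le_one_add {x : ℝ} (hx0 : 0 ≤ x) (hx1 : x ≤ 1) :
    Real.exp (x / 2) ≤ 1 + x := by
  have h1 : 1 - x / 2 ≤ (Real.exp (x / 2))⁻¹ := by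
    have := Real.add_one_le_exp (-(x / 2))
    rw [Real.exp_neg] at this
    linarith
  have h2 : 0 < Real.exp (x / 2) := Real.exp_pos _
  have h3 : Real.exp (x / 2) * (1 - x / 2) ≤ 1 := by
    calc Real.exp (x / 2) * (1 - x / 2) ≤ Real.exp (x / 2) * (Real.exp (x / 2))⁻¹ :=
          mul_le_mul_of_nonneg_left h1 h2.le
      _ = 1 := mul_inv_cancel₀ h2.ne'
  nlinarith

/-- `x/2 ≤ log (1+x)` for `0 ≤ x ≤ 1`. -/
lemma half_le_log_one_add {x : ℝ} (hx0 : 0 ≤ x) (hx1 : x ≤ 1) :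
    x / 2 ≤ Real.log (1 + x) :=
  (Real.le_log_iff_exp_le (by linarith)).mpr (exp_half_le_one_add hx0 hx1)

theorem Ip_theta_asymptotics (θ q : ℝ) (hθ : 0 ≤ θ) (hθ' : θ ≤ 1/2) (hq : -1 < q) :
    ∃ C₁ C₂ T : ℝ, 0 < C₁ ∧ 0 < C₂ ∧ 0 < T ∧
      ∀ t : ℝ, T ≤ t →
        C₁ * t ^ (-(q+1)/(2*(1-θ))) ≤ ∫ r in (0:ℝ)..1, (1 + r ^ (2 - 2*θ)) ^ (-t) * r ^ q ∧
        (∫ r in (0:ℝ)..1, (1 + r ^ (2 - 2*θ)) ^ (-t) * r ^ q) ≤ C₂ * t ^ (-(q+1)/(2*(1-θ))) := by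
  set α : ℝ := 2 - 2*θ with hαdef
  have hα1 : (1:ℝ) ≤ α := by rw [hαdef]; linarith
  have hα0 : (0:ℝ) < α := by linarith
  have hq1 : (0:ℝ) < q + 1 := by linarith
  have hexp : -(q+1)/(2*(1-θ)) = -(q+1)/α := by rw [hαdef]; ring_nf
  have hΓ : 0 < Real.Gamma ((q+1)/α) := Real.Gamma_pos_of_pos (by positivity)
  refine ⟨(Real.exp 1)⁻¹ / (q+1), 2 ^ ((q+1)/α) * ((1/α) * Real.Gamma ((q+1)/α)), 1,
    by positivity, by positivity, one_pos, ?_⟩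
  intro t ht
  have ht0 : (0:ℝ) < t := lt_of_lt_of_le one_pos ht
  rw [hexp]
  set f : ℝ → ℝ := fun r => (1 + r ^ α) ^ (-t) * r ^ q with hfdef
  set g : ℝ → ℝ := fun r => r ^ q * Real.exp (-(t/2) * r ^ α) with hgdef
  -- pointwise bound f ≤ g on Ioc 0 1
  have hfg : ∀ r ∈ Ioc (0:ℝ) 1, f r ≤ g r := by
    intro r hr
    have hr0 : 0 < r := hr.1
    have hx0 : 0 < r ^ α := Real.rpow_pos_of_pos hr0 _
    have hx1 : r ^ α ≤ 1 := Real.rpow_le_one hr0.le hr.2 hα0.le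
    have hlog : r ^ α / 2 ≤ Real.log (1 + r ^ α) := half_le_log_one_add hx0.le hx1
    have key : (1 + r ^ α) ^ (-t) ≤ Real.exp (-(t/2) * r ^ α) := by
      rw [Real.rpow_def_of_pos (by linarith)]
      apply Real.exp_le_exp.mpr
      have := mul_le_mul_of_nonneg_left hlog ht0.le
      nlinarith
    calc f r = (1 + r ^ α) ^ (-t) * r ^ q := rfl
      _ ≤ Real.exp (-(t/2) * r ^ α) * r ^ q :=
          mul_le_mul_of_nonneg_right key (Real.rpow_nonneg hr0.le _)
      _ = g r := by rw [hgdef]; ring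
  have hg_int : IntegrableOn g (Ioi (0:ℝ)) :=
    integrableOn_rpow_mul_exp_neg_mul_rpow hq hα0 (by positivity)
  have hg_nonneg : ∀ r ∈ Ioi (0:ℝ), 0 ≤ g r := fun r hr =>
    mul_nonneg (Real.rpow_nonneg (le_of_lt hr) _) (Real.exp_pos _).le
  have hf_nonneg : ∀ r ∈ Ioc (0:ℝ) 1, 0 ≤ f r := by
    intro r hr
    have h1 : (0:ℝ) ≤ r ^ α := Real.rpow_nonneg hr.1.le α
    exact mul_nonneg (Real.rpow_nonneg (by linarith) _) (Real.rpow_nonneg hr.1.le _)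
  have hf_meas : AEStronglyMeasurable f (volume.restrict (Ioc (0:ℝ) 1)) := by
    apply Measurable.aestronglyMeasurable
    fun_prop
  have hf_int : IntegrableOn f (Ioc (0:ℝ) 1) := by
    refine MeasureTheory.Integrable.mono (hg_int.mono_set Ioc_subset_Ioi_self) hf_meas ?_
    rw [ae_restrict_iff' measurableSet_Ioc]
    filter_upwards with r hr
    rw [Real.norm_of_nonneg (hf_nonneg r hr),
      Real.norm_of_nonneg (hg_nonneg r (Ioc_subset_Ioi_self hr))]
    exact hfg r hr
  constructor
  · -- lower bound
    set s : ℝ := t ^ (-α⁻¹) with hsdef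
    have hs0 : 0 < s := Real.rpow_pos_of_pos ht0 _
    have hs1 : s ≤ 1 := Real.rpow_le_one_of_one_le_of_nonpos ht (neg_nonpos.mpr (by positivity))
    have hsα : s ^ α = t⁻¹ := by
      rw [hsdef, ← Real.rpow_mul ht0.le, neg_mul, inv_mul_cancel₀ hα0.ne', Real.rpow_neg_one]
    have hIcc : ∀ r ∈ Icc (0:ℝ) s, (Real.exp 1)⁻¹ * r ^ q ≤ f r := by
      intro r hr
      have hr0 : 0 ≤ r := hr.1
      have hrα : r ^ α ≤ t⁻¹ := by
        rw [← hsα]; exact Real.rpow_le_rpow hr0 hr.2 hα0.le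
      have hrα0 : 0 ≤ r ^ α := Real.rpow_nonneg hr0 _
      have hbase : (1 + r ^ α) ^ t ≤ Real.exp 1 := by
        calc (1 + r ^ α) ^ t ≤ (1 + t⁻¹) ^ t :=
              Real.rpow_le_rpow (by linarith) (by linarith) ht0.le
          _ ≤ Real.exp 1 := by
              rw [Real.rpow_def_of_pos (by positivity)]
              apply Real.exp_le_exp.mpr
              have hlog : Real.log (1 + t⁻¹) ≤ t⁻¹ := by
                have := Real.log_le_sub_one_of_pos (show (0:ℝ) < 1 + t⁻¹ by positivity)
                linarith
              calc Real.log (1 + t⁻¹) * t ≤ t⁻¹ * t :=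
                    mul_le_mul_of_nonneg_right hlog ht0.le
                _ = 1 := inv_mul_cancel₀ ht0.ne'
      have hkey : (Real.exp 1)⁻¹ ≤ (1 + r ^ α) ^ (-t) := by
        rw [Real.rpow_neg (by linarith)]
        exact inv_anti₀ (Real.rpow_pos_of_pos (by linarith) t) hbase
      exact mul_le_mul_of_nonneg_right hkey (Real.rpow_nonneg hr0 _)
    have hint1 : IntervalIntegrable (fun r : ℝ => (Real.exp 1)⁻¹ * r ^ q) volume 0 s :=
      (intervalIntegral.intervalIntegrable_rpow' hq).const_mul _
    have hint2 : IntervalIntegrable f volume 0 s := by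
      rw [intervalIntegrable_iff_integrableOn_Ioc_of_le hs0.le]
      exact hf_int.mono_set (Ioc_subset_Ioc le_rfl hs1)
    have hstep3 : (∫ r in (0:ℝ)..s, (Real.exp 1)⁻¹ * r ^ q) ≤ ∫ r in (0:ℝ)..s, f r :=
      intervalIntegral.integral_mono_on hs0.le hint1 hint2 hIcc
    have hstep4 : (∫ r in (0:ℝ)..s, f r) ≤ ∫ r in (0:ℝ)..1, f r := by
      rw [intervalIntegral.integral_of_le hs0.le, intervalIntegral.integral_of_le zero_le_one]
      refine setIntegral_mono_set hf_int ?_ ?_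
      · exact (ae_restrict_iff' measurableSet_Ioc).mpr
          (Filter.Eventually.of_forall fun r hr => hf_nonneg r hr)
      · exact (Ioc_subset_Ioc le_rfl hs1).eventuallyLE
    have hval : (∫ r in (0:ℝ)..s, (Real.exp 1)⁻¹ * r ^ q)
        = (Real.exp 1)⁻¹ / (q+1) * t ^ (-(q+1)/α) := by
      rw [intervalIntegral.integral_const_mul, integral_rpow (Or.inl hq),
        Real.zero_rpow hq1.ne']
      have hsq : s ^ (q+1) = t ^ (-(q+1)/α) := by
        rw [hsdef, ← Real.rpow_mul ht0.le]
        congr 1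
        field_simp
      rw [hsq]; ring
    calc (Real.exp 1)⁻¹ / (q+1) * t ^ (-(q+1)/α)
        = ∫ r in (0:ℝ)..s, (Real.exp 1)⁻¹ * r ^ q := hval.symm
      _ ≤ ∫ r in (0:ℝ)..s, f r := hstep3
      _ ≤ ∫ r in (0:ℝ)..1, f r := hstep4
  · -- upper bound
    have h1 : (∫ r in (0:ℝ)..1, f r) ≤ ∫ r in Ioc (0:ℝ) 1, g r := by
      rw [intervalIntegral.integral_of_le zero_le_one]
      exact setIntegral_mono_on hf_int (hg_int.mono_set Ioc_subset_Ioi_self)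
        measurableSet_Ioc hfg
    have h2 : (∫ r in Ioc (0:ℝ) 1, g r) ≤ ∫ r in Ioi (0:ℝ), g r := by
      refine setIntegral_mono_set hg_int ?_ Ioc_subset_Ioi_self.eventuallyLE
      exact (ae_restrict_iff' measurableSet_Ioi).mpr
        (Filter.Eventually.of_forall fun r hr => hg_nonneg r hr)
    have h3 : (∫ r in Ioi (0:ℝ), g r)
        = (t/2) ^ (-(q+1)/α) * (1/α) * Real.Gamma ((q+1)/α) :=
      integral_rpow_mul_exp_neg_mul_rpow hα0 hq (by positivity)
    have h4 : (t/2) ^ (-(q+1)/α) = 2 ^ ((q+1)/α) * t ^ (-(q+1)/α) := by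
      rw [div_eq_mul_inv, Real.mul_rpow ht0.le (by norm_num),
        Real.inv_rpow (by norm_num), ← Real.rpow_neg (by norm_num), neg_div, neg_neg]
      ring
    calc (∫ r in (0:ℝ)..1, f r) ≤ ∫ r in Ioi (0:ℝ), g r := h1.trans h2
      _ = 2 ^ ((q+1)/α) * ((1/α) * Real.Gamma ((q+1)/α)) * t ^ (-(q+1)/α) := by
          rw [h3, h4]; ring
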